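/- arXiv:2603.07802 — 9 statements merged into one kernel-verified Lean document; each statement's English description precedes it below -/
import Mathlib

section
/- Let K be a differential ring with derivation D, let f be a unit of K, and set u := f⁻¹ * D(f). Then for every natural number m, the noncommutative Bell polynomial satisfies P_m(u) = f⁻¹ * D^m(f). -/
/-- Noncommutative Bell polynomials: `P 0 = 1`, `P (m+1) = D (P m) + u * P m`. -/
def bellP {K : Type*} [Ring K] (D : K → K) (u : K) : ℕ → K
  | 0 => 1
  | m + 1 => D (bellP D u m) + u * bellP D u m

/-- if `u = f⁻¹ * D f` for a unit `f`, then `P m (u) = f⁻¹ * D^[m] f`. -/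
theorem bellP_eq_conj_iterate {K : Type*} [Ring K] (D : K → K)
    (hadd : ∀ a b : K, D (a + b) = D a + D b)
    (hmul : ∀ a b : K, D (a * b) = D a * b + a * D b)
    (f : Kˣ) (u : K) (hu : u = (↑f⁻¹ : K) * D (f : K)) :
    ∀ m : ℕ, bellP D u m = (↑f⁻¹ : K) * D^[m] (f : K) := by
  have hone : D 1 = 0 := by
    have := hmul 1 1
    simpa using this
  have hinv : D (↑f⁻¹ : K) = -((↑f⁻¹ : K) * D (f : K) * (↑f⁻¹ : K)) := by
    have h := hmul (↑f⁻¹ : K) (f : K)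
    rw [Units.inv_mul, hone] at h
    have h2 : D (↑f⁻¹ : K) * (f : K) = -((↑f⁻¹ : K) * D (f : K)) := by
      exact eq_neg_of_add_eq_zero_left h.symm
    calc D (↑f⁻¹ : K) = D (↑f⁻¹ : K) * (f : K) * (↑f⁻¹ : K) := by
          rw [mul_assoc, Units.mul_inv, mul_one]
      _ = -((↑f⁻¹ : K) * D (f : K) * (↑f⁻¹ : K)) := by rw [h2, neg_mul]
  intro m
  induction m with
  | zero => simp [bellP]
  | succ n ih =>
    rw [bellP, ih, hmul, hinv, hu, Function.iterate_succ_apply']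
    noncomm_ring
end

section
/- Let K be a differential ring with derivation D and let u ∈ K. For every natural number m and every y ∈ K, the m-th iterate of the operator y ↦ D(y) + u*y applied to y equals Σ_{j=0}^{m} C(m,j) * P_{m−j}(u) * D^j(y), where C(m,j) denotes the binomial coefficient. -/
/-- normal ordering of `(D + u)^m`. -/
theorem shifted_iterate_normal_order {K : Type*} [Ring K] (D : K → K)
    (hadd : ∀ a b : K, D (a + b) = D a + D b)
    (hmul : ∀ a b : K, D (a * b) = D a * b + a * D b)
    (u : K) (m : ℕ) (y : K) :
    (fun z => D z + u * z)^[m] y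
      = ∑ j ∈ Finset.range (m + 1),
          (m.choose j : K) * bellP D u (m - j) * D^[j] y := by
  have hD1 : D 1 = 0 := by
    have h : D (1 : K) = D 1 + D 1 := by simpa using hmul 1 1
    exact (left_eq_add.mp h)
  have hDnat : ∀ n : ℕ, D (n : K) = 0 := by
    intro n
    induction n with
    | zero =>
      have h : D (0 : K) = D 0 + D 0 := by simpa using hadd 0 0
      simpa using (left_eq_add.mp h)
    | succ n ihn =>
      push_cast
      rw [hadd, ihn, hD1, add_zero]
  have hDsum : ∀ (s : Finset ℕ) (f : ℕ → K),
      D (∑ j ∈ s, f j) = ∑ j ∈ s, D (f j) :=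
    fun s f => map_sum (AddMonoidHom.mk' D hadd) f s
  induction m with
  | zero => simp [bellP]
  | succ m ih =>
    rw [Function.iterate_succ_apply', ih]
    -- LHS = D (∑ ...) + u * ∑ ...
    rw [hDsum, Finset.mul_sum]
    have hterm : ∀ j ∈ Finset.range (m + 1),
        D ((m.choose j : K) * bellP D u (m - j) * D^[j] y)
          + u * ((m.choose j : K) * bellP D u (m - j) * D^[j] y)
        = (m.choose j : K) * bellP D u (m + 1 - j) * D^[j] y
          + (m.choose j : K) * bellP D u (m - j) * D^[j + 1] y := by
      intro j hj
      have hjle : j ≤ m := Nat.lt_succ_iff.mp (Finset.mem_range.mp hj)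
      have hsub : m + 1 - j = (m - j) + 1 := by omega
      rw [hsub]
      show D ((m.choose j : K) * bellP D u (m - j) * D^[j] y)
          + u * ((m.choose j : K) * bellP D u (m - j) * D^[j] y)
        = (m.choose j : K) * bellP D u ((m - j) + 1) * D^[j] y
          + (m.choose j : K) * bellP D u (m - j) * D^[j + 1] y
      rw [hmul, hmul, hDnat, Function.iterate_succ_apply']
      have hc : ∀ a : K, u * ((m.choose j : K) * a) = (m.choose j : K) * (u * a) := by
        intro a
        rw [← mul_assoc, ← mul_assoc, (Nat.cast_commute (m.choose j) u).eq]
      show (0 * bellP D u (m - j) + (m.choose j : K) * D (bellP D u (m - j))) * D^[j] y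
          + (m.choose j : K) * bellP D u (m - j) * D (D^[j] y)
          + u * ((m.choose j : K) * bellP D u (m - j) * D^[j] y)
        = (m.choose j : K) * (D (bellP D u (m - j)) + u * bellP D u (m - j)) * D^[j] y
          + (m.choose j : K) * bellP D u (m - j) * D (D^[j] y)
      simp only [zero_mul, zero_add, mul_assoc, add_mul, mul_add, hc]
      abel
    rw [← Finset.sum_add_distrib, Finset.sum_congr rfl hterm, Finset.sum_add_distrib]
    -- now show RHS of key equality
    have key : ∑ j ∈ Finset.range (m + 2),
        ((m + 1).choose j : K) * bellP D u (m + 1 - j) * D^[j] y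
      = ∑ j ∈ Finset.range (m + 1),
          (m.choose j : K) * bellP D u (m + 1 - j) * D^[j] y
        + ∑ j ∈ Finset.range (m + 1),
          (m.choose j : K) * bellP D u (m - j) * D^[j + 1] y := by
      rw [Finset.sum_range_succ' (fun j => ((m + 1).choose j : K) * bellP D u (m + 1 - j) * D^[j] y)]
      have h2 : ∀ j ∈ Finset.range (m + 1),
          ((m + 1).choose (j + 1) : K) * bellP D u (m + 1 - (j + 1)) * D^[j + 1] y
          = (m.choose (j + 1) : K) * bellP D u (m - j) * D^[j + 1] y
            + (m.choose j : K) * bellP D u (m - j) * D^[j + 1] y := by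
        intro j hj
        have : m + 1 - (j + 1) = m - j := by omega
        rw [this, Nat.choose_succ_succ]
        push_cast
        rw [add_mul, add_mul]
        exact add_comm _ _
      rw [Finset.sum_congr rfl h2, Finset.sum_add_distrib]
      have h3 : ∑ j ∈ Finset.range (m + 1),
          (m.choose (j + 1) : K) * bellP D u (m - j) * D^[j + 1] y
          + ((m + 1).choose 0 : K) * bellP D u (m + 1 - 0) * D^[0] y
        = ∑ j ∈ Finset.range (m + 1),
          (m.choose j : K) * bellP D u (m + 1 - j) * D^[j] y := by
        rw [Finset.sum_range_succ' (fun j => (m.choose j : K) * bellP D u (m + 1 - j) * D^[j] y) m]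
        rw [Finset.sum_range_succ]
        simp only [Nat.choose_succ_self, Nat.cast_zero, zero_mul, add_zero]
        congr 1
        · exact Finset.sum_congr rfl fun j hj => by
            congr 3
            omega
        · norm_num
      rw [add_right_comm, h3]
    rw [key]
end

section
/- Let K be a differential ring with derivation D, let n be a natural number, let a_0 = 1, a_1, ..., a_n ∈ K, let f be a unit of K, and set u := f⁻¹ * D(f). Define ã_k := Σ_{j=0}^{k} C(k,j) * (f⁻¹ * a_{k−j} * f) * P_j(u) for 0 ≤ k ≤ n. Then for every y ∈ K, f⁻¹ * ( Σ_{i=0}^{n} C(n,i) * a_i * D^{n−i}(f*y) ) = Σ_{k=0}^{n} C(n,k) * ã_k * D^{n−k}(y). -/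
open Finset


section Aux

variable {K : Type*} [Ring K]

lemma D_natCast_mul (D : K → K) (hadd : ∀ a b : K, D (a + b) = D a + D b)
    (c : ℕ) (x : K) : D ((c : K) * x) = (c : K) * D x := by
  let Dh : K →+ K := AddMonoidHom.mk' D hadd
  have : ∀ z : K, D z = Dh z := fun z => rfl
  rw [this, this, ← nsmul_eq_mul, map_nsmul, nsmul_eq_mul]

lemma leibniz_bell (D : K → K) (hadd : ∀ a b : K, D (a + b) = D a + D b)
    (hmul : ∀ a b : K, D (a * b) = D a * b + a * D b) (f : Kˣ) (u : K) (hu : u = (↑f⁻¹ : K) * D (f : K)) :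
    ∀ (m : ℕ) (y : K), D^[m] ((f : K) * y)
      = (f : K) * ∑ j ∈ range (m + 1),
          (m.choose j : K) * bellP D u j * D^[m - j] y := by
  have hDf : D (f : K) = (f : K) * u := by
    rw [hu, ← mul_assoc, Units.mul_inv, one_mul]
  intro m
  induction m with
  | zero => intro y; simp [bellP]
  | succ m ih =>
    intro y
    rw [Function.iterate_succ_apply', ih y]
    -- D (f * S) = f * (u * S + D S)
    have hDsum : D (∑ j ∈ range (m + 1), (m.choose j : K) * bellP D u j * D^[m - j] y)
        = ∑ j ∈ range (m + 1), (m.choose j : K) *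
            (D (bellP D u j) * D^[m - j] y + bellP D u j * D^[m - j + 1] y) := by
      let Dh : K →+ K := AddMonoidHom.mk' D hadd
      have hD : ∀ z : K, D z = Dh z := fun z => rfl
      rw [hD, map_sum]
      refine Finset.sum_congr rfl fun j hj => ?_
      rw [← hD, mul_assoc, D_natCast_mul D hadd, hmul, Function.iterate_succ_apply', mul_add]
    rw [hmul, hDf, hDsum]
    have key : (f : K) * u * (∑ j ∈ range (m + 1), (m.choose j : K) * bellP D u j * D^[m - j] y)
        + (f : K) * (∑ j ∈ range (m + 1), (m.choose j : K) *
            (D (bellP D u j) * D^[m - j] y + bellP D u j * D^[m - j + 1] y))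
        = (f : K) * ((∑ j ∈ range (m + 1), (m.choose j : K) * bellP D u (j + 1) * D^[m - j] y)
          + ∑ j ∈ range (m + 1), (m.choose j : K) * bellP D u j * D^[m + 1 - j] y) := by
      rw [mul_assoc, Finset.mul_sum, ← mul_add, ← Finset.sum_add_distrib,
        ← Finset.sum_add_distrib]
      congr 1
      refine Finset.sum_congr rfl fun j hj => ?_
      have hj' : j ≤ m := Nat.lt_succ_iff.mp (Finset.mem_range.mp hj)
      have h1 : m + 1 - j = m - j + 1 := by omega
      rw [h1]
      simp only [bellP, add_mul, mul_add, ← mul_assoc,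
        ← (Nat.cast_commute (m.choose j) u).eq]
      abel
    rw [key]
    congr 1
    -- combine sums into S (m+1)
    have hA : ∑ j ∈ range (m + 1), (m.choose j : K) * bellP D u (j + 1) * D^[m - j] y
        = ∑ j ∈ range (m + 1), (m.choose j : K) * bellP D u (j + 1) * D^[m + 1 - (j + 1)] y := by
      exact Finset.sum_congr rfl fun j hj => by rw [Nat.succ_sub_succ]
    have hB : ∑ j ∈ range (m + 1), (m.choose j : K) * bellP D u j * D^[m + 1 - j] y
        = D^[m + 1] y + ∑ j ∈ range (m + 1), (m.choose (j + 1) : K)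
            * bellP D u (j + 1) * D^[m + 1 - (j + 1)] y := by
      rw [Finset.sum_range_succ' (fun j => (m.choose j : K) * bellP D u j * D^[m + 1 - j] y) m]
      rw [Finset.sum_range_succ]
      simp [bellP, Nat.choose_succ_self]
      abel
    rw [hA, hB]
    rw [Finset.sum_range_succ' (fun j => ((m + 1).choose j : K) * bellP D u j * D^[m + 1 - j] y) (m + 1)]
    simp only [Nat.choose_succ_succ, Nat.cast_add, add_mul, Nat.sub_zero,
      Nat.choose_zero_right, Nat.cast_one]
    rw [Finset.sum_add_distrib]
    simp [bellP]
    abel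

end Aux

lemma swap_double_sum {K : Type*} [Ring K] (n : ℕ) (F G : ℕ → ℕ → K)
    (hFG : ∀ i j, i + j ≤ n → F i j = G (i + j) j) :
    ∑ i ∈ range (n + 1), ∑ j ∈ range (n - i + 1), F i j
      = ∑ k ∈ range (n + 1), ∑ j ∈ range (k + 1), G k j := by
  rw [Finset.sum_sigma', Finset.sum_sigma']
  refine Finset.sum_nbij' (fun p => ⟨p.1 + p.2, p.2⟩) (fun p => ⟨p.1 - p.2, p.2⟩)
    ?_ ?_ ?_ ?_ ?_
  · rintro ⟨i, j⟩ hp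
    simp only [Finset.mem_sigma, Finset.mem_range] at hp ⊢
    omega
  · rintro ⟨k, j⟩ hp
    simp only [Finset.mem_sigma, Finset.mem_range] at hp ⊢
    omega
  · rintro ⟨i, j⟩ hp
    simp only [Finset.mem_sigma, Finset.mem_range] at hp
    simp only [Nat.add_sub_cancel]
  · rintro ⟨k, j⟩ hp
    simp only [Finset.mem_sigma, Finset.mem_range] at hp
    have : k - j + j = k := by omega
    simp [this]
  · rintro ⟨i, j⟩ hp
    simp only [Finset.mem_sigma, Finset.mem_range] at hp
    exact hFG i j (by omega)

/-- gauge action on the binomially normalized coefficients. -/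
theorem gauge_action_on_coefficients {K : Type*} [Ring K] (D : K → K)
    (hadd : ∀ a b : K, D (a + b) = D a + D b)
    (hmul : ∀ a b : K, D (a * b) = D a * b + a * D b)
    (n : ℕ) (a : ℕ → K) (ha0 : a 0 = 1)
    (f : Kˣ) (u : K) (hu : u = (↑f⁻¹ : K) * D (f : K))
    (ta : ℕ → K)
    (hta : ∀ k, ta k = ∑ j ∈ Finset.range (k + 1),
      (k.choose j : K) * ((↑f⁻¹ : K) * a (k - j) * (f : K)) * bellP D u j)
    (y : K) :
    (↑f⁻¹ : K) * (∑ i ∈ Finset.range (n + 1),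
        (n.choose i : K) * a i * D^[n - i] ((f : K) * y))
      = ∑ k ∈ Finset.range (n + 1), (n.choose k : K) * ta k * D^[n - k] y := by
  have hL : (↑f⁻¹ : K) * (∑ i ∈ Finset.range (n + 1),
        (n.choose i : K) * a i * D^[n - i] ((f : K) * y))
      = ∑ i ∈ Finset.range (n + 1), ∑ j ∈ Finset.range (n - i + 1),
          (↑f⁻¹ : K) * ((n.choose i : K) * a i * ((f : K) *
            (((n - i).choose j : K) * bellP D u j * D^[n - i - j] y))) := by
    rw [Finset.mul_sum]
    refine Finset.sum_congr rfl fun i hi => ?_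
    rw [leibniz_bell D hadd hmul f u hu (n - i) y, Finset.mul_sum, Finset.mul_sum,
      Finset.mul_sum]
  have hR : ∑ k ∈ Finset.range (n + 1), (n.choose k : K) * ta k * D^[n - k] y
      = ∑ k ∈ Finset.range (n + 1), ∑ j ∈ Finset.range (k + 1),
          ((n.choose k : K) * ((k.choose j : K) * ((↑f⁻¹ : K) * a (k - j) * (f : K))
            * bellP D u j)) * D^[n - k] y := by
    refine Finset.sum_congr rfl fun k hk => ?_
    rw [hta k, Finset.mul_sum, Finset.sum_mul]
  rw [hL, hR]
  refine swap_double_sum n _ _ fun i j hij => ?_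
  have e1 : i + j - j = i := by omega
  have e2 : n - (i + j) = n - i - j := by omega
  have e3 : n.choose (i + j) * ((i + j).choose j) = n.choose i * ((n - i).choose j) := by
    have h1 : (i + j).choose j = (i + j).choose i := by
      rw [← Nat.choose_symm (Nat.le_add_right i j)]
      congr 1
      omega
    rw [h1, Nat.choose_mul (Nat.le_add_right i j), Nat.add_sub_cancel_left]
  rw [e1, e2]
  simp only [← nsmul_eq_mul, smul_mul_assoc, mul_smul_comm, smul_smul, mul_assoc]
  congr 1
  exact (Nat.mul_comm _ _).trans (e3.symm.trans (Nat.mul_comm _ _))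
end

section
/- Let K be a differential ring with derivation D, let a_0 = 1, a_1, ..., a_n ∈ K, let f be a unit of K, and set u := f⁻¹ * D(f). Let ã_k := Σ_{j=0}^{k} C(k,j) * (f⁻¹ * a_{k−j} * f) * P_j(u) be the gauge-transformed coefficients, and let Ĩ_k := Σ_{j=0}^{k} C(k,j) * ã_{k−j} * Q̃_j(−ã_1), where Q̃_j are the covariant Bell polynomials relative to ã_1. Similarly let I_k := Σ_{j=0}^{k} C(k,j) * a_{k−j} * Q_j(−a_1) with Q_j the covariant Bell polynomials relative to a_1. Then for every 0 ≤ k ≤ n one has the gauge covariance Ĩ_k = f⁻¹ * I_k * f. -/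
/-- Covariant Bell polynomials relative to `c`:
`Q 0 = 1`, `Q (m+1) = Δ_c (Q m) + u * Q m` where `Δ_c b = D b + c*b - b*c`. -/
def qBell {K : Type*} [Ring K] (D : K → K) (c u : K) : ℕ → K
  | 0 => 1
  | m + 1 =>
      (D (qBell D c u m) + c * qBell D c u m - qBell D c u m * c)
        + u * qBell D c u m

section IkAuxSect
variable {K : Type*} [Ring K]

/-- Binomial convolution. -/
def bconv (x y : ℕ → K) (k : ℕ) : K :=
  ∑ j ∈ Finset.range (k + 1), k.choose j • (x (k - j) * y j)

theorem bconv_eq_sum (x y : ℕ → K) (k : ℕ) :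
    bconv x y k = ∑ j ∈ Finset.range (k + 1),
      (k.choose j : K) * x (k - j) * y j := by
  simp [bconv, nsmul_eq_mul, mul_assoc]

theorem bconv_zero (x y : ℕ → K) : bconv x y 0 = x 0 * y 0 := by
  simp [bconv]

theorem bconv_succ (x y : ℕ → K) (k : ℕ) :
    bconv x y (k + 1) =
      bconv (fun i => x (i + 1)) y k + bconv x (fun i => y (i + 1)) k := by
  unfold bconv
  rw [Finset.sum_range_succ' (fun j => (k+1).choose j • (x (k+1-j) * y j)) (k+1)]
  have h1 : ∀ j ∈ Finset.range (k+1),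
      (k+1).choose (j+1) • (x (k+1-(j+1)) * y (j+1))
      = k.choose j • (x (k - j) * y (j+1)) + k.choose (j+1) • (x (k - j) * y (j+1)) := by
    intro j hj
    rw [Nat.choose_succ_succ, add_smul, Nat.succ_sub_succ]
  rw [Finset.sum_congr rfl h1, Finset.sum_add_distrib]
  have h2 : ∑ j ∈ Finset.range (k+1), k.choose (j+1) • (x (k - j) * y (j+1))
      = ∑ j ∈ Finset.range (k+1), k.choose j • (x (k+1-j) * y j)
        - k.choose 0 • (x (k+1) * y 0) := by
    rw [Finset.sum_range_succ' (fun j => k.choose j • (x (k+1-j) * y j)) k]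
    simp [Nat.succ_sub_succ]
    rw [Finset.sum_range_succ]
    simp [Nat.choose_succ_self]
  rw [h2]
  have h3 : ∑ j ∈ Finset.range (k+1), k.choose j • (x (k+1-j) * y j)
      = ∑ j ∈ Finset.range (k+1), k.choose j • (x ((k-j)+1) * y j) :=
    Finset.sum_congr rfl fun j hj => by
      rw [Nat.succ_sub (Nat.lt_succ_iff.mp (Finset.mem_range.mp hj))]
  rw [h3]
  simp [Nat.choose_zero_right]
  abel

theorem bconv_add_left (x z y : ℕ → K) (k : ℕ) :
    bconv (fun i => x i + z i) y k = bconv x y k + bconv z y k := by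
  simp [bconv, add_mul, smul_add, Finset.sum_add_distrib]

theorem bconv_add_right (x y z : ℕ → K) (k : ℕ) :
    bconv x (fun i => y i + z i) k = bconv x y k + bconv x z k := by
  simp [bconv, mul_add, smul_add, Finset.sum_add_distrib]

theorem bconv_sub_left (x z y : ℕ → K) (k : ℕ) :
    bconv (fun i => x i - z i) y k = bconv x y k - bconv z y k := by
  simp [bconv, sub_mul, smul_sub, Finset.sum_sub_distrib]

theorem bconv_sub_right (x y z : ℕ → K) (k : ℕ) :
    bconv x (fun i => y i - z i) k = bconv x y k - bconv x z k := by
  simp [bconv, mul_sub, smul_sub, Finset.sum_sub_distrib]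

theorem bconv_mul_left (a : K) (x y : ℕ → K) (k : ℕ) :
    a * bconv x y k = bconv (fun i => a * x i) y k := by
  simp only [bconv, Finset.mul_sum]
  refine Finset.sum_congr rfl fun j _ => ?_
  rw [mul_smul_comm, mul_assoc]

theorem bconv_mul_right (x y : ℕ → K) (a : K) (k : ℕ) :
    bconv x y k * a = bconv x (fun i => y i * a) k := by
  simp [bconv, Finset.sum_mul, smul_mul_assoc, mul_assoc]

theorem bconv_shift (x y : ℕ → K) (a : K) (k : ℕ) :
    bconv x (fun i => a * y i) k = bconv (fun i => x i * a) y k := by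
  simp [bconv, mul_assoc]

theorem bconv_congr {x x' y y' : ℕ → K} (hx : ∀ i, x i = x' i)
    (hy : ∀ i, y i = y' i) (k : ℕ) : bconv x y k = bconv x' y' k := by
  have : x = x' := funext hx
  have h2 : y = y' := funext hy
  rw [this, h2]

theorem bconv_assoc (x y z : ℕ → K) (k : ℕ) :
    bconv (fun i => bconv x y i) z k = bconv x (fun i => bconv y z i) k := by
  induction k generalizing x y z with
  | zero => simp [bconv_zero, mul_assoc]
  | succ k ih =>
    rw [bconv_succ, bconv_succ]
    have h1 : bconv (fun i => bconv x y (i + 1)) z k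
        = bconv (fun i => bconv (fun i => x (i+1)) y i) z k
          + bconv (fun i => bconv x (fun i => y (i+1)) i) z k := by
      rw [← bconv_add_left]
      exact bconv_congr (fun i => bconv_succ x y i) (fun _ => rfl) k
    have h2 : bconv x (fun i => bconv y z (i + 1)) k
        = bconv x (fun i => bconv (fun i => y (i+1)) z i) k
          + bconv x (fun i => bconv y (fun i => z (i+1)) i) k := by
      rw [← bconv_add_right]
      exact bconv_congr (fun _ => rfl) (fun i => bconv_succ y z i) k
    rw [h1, h2, ih, ih, ih]
    abel

theorem bconv_delta_right (x y : ℕ → K) (h0 : y 0 = 1)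
    (h : ∀ i, 0 < i → y i = 0) (k : ℕ) : bconv x y k = x k := by
  unfold bconv
  rw [Finset.sum_range_succ' (fun j => k.choose j • (x (k-j) * y j)) k]
  have : ∀ j ∈ Finset.range k, k.choose (j+1) • (x (k-(j+1)) * y (j+1)) = 0 := by
    intro j hj
    rw [h (j+1) (Nat.succ_pos j), mul_zero, smul_zero]
  rw [Finset.sum_congr rfl this]
  simp [h0]

theorem bconv_delta_left (x y : ℕ → K) (h0 : x 0 = 1)
    (h : ∀ i, 0 < i → x i = 0) (k : ℕ) : bconv x y k = y k := by
  unfold bconv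
  rw [Finset.sum_range_succ]
  have : ∀ j ∈ Finset.range k, k.choose j • (x (k-j) * y j) = 0 := by
    intro j hj
    rw [h (k - j) (Nat.sub_pos_of_lt (Finset.mem_range.mp hj)), zero_mul, smul_zero]
  rw [Finset.sum_congr rfl this]
  simp [h0]


section D
variable (D : K → K) (hadd : ∀ a b : K, D (a + b) = D a + D b)
  (hmul : ∀ a b : K, D (a * b) = D a * b + a * D b)
include hadd hmul
set_option linter.unusedSectionVars false
set_option linter.unusedSectionVars false

theorem D_zero : D 0 = 0 := by
  have := hadd 0 0
  simpa using this

theorem D_one : D 1 = 0 := by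
  have := hmul 1 1
  simpa using this

theorem D_nsmul (n : ℕ) (x : K) : D (n • x) = n • D x := by
  induction n with
  | zero => simpa using D_zero D hadd hmul
  | succ m ih => rw [succ_nsmul, succ_nsmul, hadd, ih]

theorem D_sum {α : Type*} (s : Finset α) (g : α → K) :
    D (∑ i ∈ s, g i) = ∑ i ∈ s, D (g i) := by
  classical
  induction s using Finset.induction with
  | empty => simpa using D_zero D hadd hmul
  | insert _ _ h ih => rw [Finset.sum_insert h, Finset.sum_insert h, hadd, ih]

theorem D_iter_zero (s : ℕ) : D^[s] (0 : K) = 0 := by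
  induction s with
  | zero => rfl
  | succ m ih => rw [Function.iterate_succ_apply, D_zero D hadd hmul, ih]

theorem D_iter_one {s : ℕ} (hs : 0 < s) : D^[s] (1 : K) = 0 := by
  obtain ⟨m, rfl⟩ := Nat.exists_eq_succ_of_ne_zero hs.ne'
  rw [Function.iterate_succ_apply, D_one D hadd hmul, D_iter_zero D hadd hmul]

theorem bconv_D (x y : ℕ → K) (k : ℕ) :
    D (bconv x y k) =
      bconv (fun i => D (x i)) y k + bconv x (fun i => D (y i)) k := by
  unfold bconv
  rw [D_sum D hadd hmul, ← Finset.sum_add_distrib]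
  refine Finset.sum_congr rfl fun j _ => ?_
  rw [D_nsmul D hadd hmul, hmul, smul_add]

theorem iter_leibniz (x y : K) (s : ℕ) :
    D^[s] (x * y) = bconv (fun i => D^[i] x) (fun i => D^[i] y) s := by
  induction s with
  | zero => simp [bconv_zero]
  | succ m ih =>
    rw [Function.iterate_succ_apply', ih, bconv_D D hadd hmul, bconv_succ]
    congr 1
    · exact bconv_congr (fun i => (Function.iterate_succ_apply' D i x).symm) (fun _ => rfl) m
    · exact bconv_congr (fun _ => rfl) (fun i => (Function.iterate_succ_apply' D i y).symm) m

end D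

section Units1
variable {K : Type*} [Ring K]
variable (D : K → K) (hadd : ∀ a b : K, D (a + b) = D a + D b)
  (hmul : ∀ a b : K, D (a * b) = D a * b + a * D b)
include hadd hmul
set_option linter.unusedSectionVars false

theorem D_inv (f : Kˣ) :
    D (↑f⁻¹ : K) = -((↑f⁻¹ : K) * D (f : K) * (↑f⁻¹ : K)) := by
  have h0 : D ((↑f⁻¹ : K) * (f : K)) = 0 := by
    rw [Units.inv_mul]; exact D_one D hadd hmul
  rw [hmul] at h0
  have h1 : D (↑f⁻¹ : K) * (f : K) = -((↑f⁻¹ : K) * D (f : K)) :=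
    eq_neg_of_add_eq_zero_left h0
  have h2 : D (↑f⁻¹ : K) = D (↑f⁻¹ : K) * ((f : K) * (↑f⁻¹ : K)) := by
    rw [Units.mul_inv, mul_one]
  rw [h2, ← mul_assoc, h1, neg_mul]

theorem f_bellP (f : Kˣ) (u : K) (hu : u = (↑f⁻¹ : K) * D (f : K)) :
    ∀ j, (f : K) * bellP D u j = D^[j] (f : K) := by
  intro j
  induction j with
  | zero => simp [bellP]
  | succ m ih =>
    rw [Function.iterate_succ_apply', ← ih]
    show (f : K) * (D (bellP D u m) + u * bellP D u m) = D ((f : K) * bellP D u m)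
    rw [hmul, mul_add, hu, mul_assoc (↑f⁻¹ : K), Units.mul_inv_cancel_left]
    abel

theorem psi_succ (f : Kˣ) (i : ℕ) :
    (f : K) * D^[i+1] (↑f⁻¹ : K)
      = D ((f : K) * D^[i] (↑f⁻¹ : K))
        - (D (f : K) * (↑f⁻¹ : K)) * ((f : K) * D^[i] (↑f⁻¹ : K)) := by
  rw [hmul, Function.iterate_succ_apply']
  rw [mul_assoc (D (f : K)) (↑f⁻¹ : K), Units.inv_mul_cancel_left]
  abel

theorem q_rec (c : K) (m : ℕ) :
    qBell D c (-c) (m + 1) = D (qBell D c (-c) m) - qBell D c (-c) m * c := by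
  show (D (qBell D c (-c) m) + c * qBell D c (-c) m - qBell D c (-c) m * c)
      + (-c) * qBell D c (-c) m = _
  rw [neg_mul]
  abel

end Units1




end IkAuxSect

set_option maxHeartbeats 1000000 in
/-- gauge covariance of the covariants `I_k`. -/
theorem Ik_gauge_covariance {K : Type*} [Ring K] (D : K → K)
    (hadd : ∀ a b : K, D (a + b) = D a + D b)
    (hmul : ∀ a b : K, D (a * b) = D a * b + a * D b)
    (n : ℕ) (a : ℕ → K) (ha0 : a 0 = 1)
    (f : Kˣ) (u : K) (hu : u = (↑f⁻¹ : K) * D (f : K))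
    (ta : ℕ → K)
    (hta : ∀ k, ta k = ∑ j ∈ Finset.range (k + 1),
      (k.choose j : K) * ((↑f⁻¹ : K) * a (k - j) * (f : K)) * bellP D u j)
    (I tI : ℕ → K)
    (hI : ∀ k, I k = ∑ j ∈ Finset.range (k + 1),
      (k.choose j : K) * a (k - j) * qBell D (a 1) (-(a 1)) j)
    (htI : ∀ k, tI k = ∑ j ∈ Finset.range (k + 1),
      (k.choose j : K) * ta (k - j) * qBell D (ta 1) (-(ta 1)) j) :
    ∀ k ≤ n, tI k = (↑f⁻¹ : K) * I k * (f : K) := by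
  intro k _
  -- Abbreviated names for the key sequences
  have hQ1 : ∀ j, (f : K) * bellP D u j = D^[j] (f : K) :=
    f_bellP D hadd hmul f u hu
  -- The φ-ψ convolution is a Kronecker delta
  have hδ0 : bconv (fun i => D^[i] (f : K) * (↑f⁻¹ : K))
      (fun i => (f : K) * D^[i] (↑f⁻¹ : K)) 0 = 1 := by
    rw [bconv_zero]
    simp
  have hδpos : ∀ s, 0 < s → bconv (fun i => D^[i] (f : K) * (↑f⁻¹ : K))
      (fun i => (f : K) * D^[i] (↑f⁻¹ : K)) s = 0 := by
    intro s hs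
    have h1 : bconv (fun i => D^[i] (f : K) * (↑f⁻¹ : K))
        (fun i => (f : K) * D^[i] (↑f⁻¹ : K)) s
        = bconv (fun i => D^[i] (f : K)) (fun i => D^[i] (↑f⁻¹ : K)) s := by
      unfold bconv
      refine Finset.sum_congr rfl fun j _ => ?_
      simp only [mul_assoc, Units.inv_mul_cancel_left]
    rw [h1, ← iter_leibniz D hadd hmul, Units.mul_inv, D_iter_one D hadd hmul hs]
  have hphiR : ∀ i, bconv (fun i => D^[i] (f : K) * (↑f⁻¹ : K))
      (fun j => bconv (fun i => (f : K) * D^[i] (↑f⁻¹ : K))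
        (qBell D (a 1) (-(a 1))) j) i = qBell D (a 1) (-(a 1)) i := by
    intro i
    rw [← bconv_assoc]
    exact bconv_delta_left _ _ hδ0 hδpos i
  -- gauge transformed coefficients
  have hta_w : ∀ s, ta s * (↑f⁻¹ : K)
      = (↑f⁻¹ : K) * bconv a (fun i => D^[i] (f : K) * (↑f⁻¹ : K)) s := by
    intro s
    have h0 : ta s = bconv (fun i => (↑f⁻¹ : K) * a i * (f : K)) (bellP D u) s := by
      rw [hta s, bconv_eq_sum]
    rw [h0, bconv_mul_right, bconv_mul_left]
    unfold bconv
    refine Finset.sum_congr rfl fun j _ => ?_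
    simp only [← hQ1, mul_assoc]
  -- recursion for R = bconv ψ Q
  have hRrec : ∀ j, bconv (fun i => (f : K) * D^[i] (↑f⁻¹ : K))
        (qBell D (a 1) (-(a 1))) (j + 1)
      = D (bconv (fun i => (f : K) * D^[i] (↑f⁻¹ : K)) (qBell D (a 1) (-(a 1))) j)
        - bconv (fun i => (f : K) * D^[i] (↑f⁻¹ : K)) (qBell D (a 1) (-(a 1))) j * a 1
        - (D (f : K) * (↑f⁻¹ : K))
            * bconv (fun i => (f : K) * D^[i] (↑f⁻¹ : K)) (qBell D (a 1) (-(a 1))) j := by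
    intro j
    rw [bconv_succ]
    have e1 : bconv (fun i => (f : K) * D^[(i+1)] (↑f⁻¹ : K)) (qBell D (a 1) (-(a 1))) j
        = bconv (fun i => D ((f : K) * D^[i] (↑f⁻¹ : K))
            - (D (f : K) * (↑f⁻¹ : K)) * ((f : K) * D^[i] (↑f⁻¹ : K)))
            (qBell D (a 1) (-(a 1))) j :=
      bconv_congr (fun i => psi_succ D hadd hmul f i) (fun _ => rfl) j
    have e2 : bconv (fun i => (f : K) * D^[i] (↑f⁻¹ : K))
        (fun i => qBell D (a 1) (-(a 1)) (i + 1)) j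
        = bconv (fun i => (f : K) * D^[i] (↑f⁻¹ : K))
            (fun i => D (qBell D (a 1) (-(a 1)) i) - qBell D (a 1) (-(a 1)) i * a 1) j :=
      bconv_congr (fun _ => rfl) (fun i => q_rec D hadd hmul (a 1) i) j
    rw [e1, e2, bconv_sub_left, bconv_sub_right,
      bconv_D D hadd hmul, ← bconv_mul_left, ← bconv_mul_right]
    abel
  -- value of the first transformed coefficient
  have hta1 : ta 1 = (↑f⁻¹ : K) * a 1 * (f : K) + u := by
    rw [hta 1, Finset.sum_range_succ, Finset.sum_range_one]
    have hb1 : bellP D u 1 = u := by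
      show D (bellP D u 0) + u * bellP D u 0 = u
      show D 1 + u * 1 = u
      rw [D_one D hadd hmul, mul_one, zero_add]
    have hb0 : bellP D u 0 = 1 := rfl
    simp [hb0, hb1, ha0]
  -- gauge covariance of the covariant Bell polynomials (via R)
  have htQ : ∀ j, qBell D (ta 1) (-(ta 1)) j
      = (↑f⁻¹ : K) * bconv (fun i => (f : K) * D^[i] (↑f⁻¹ : K))
          (qBell D (a 1) (-(a 1))) j * (f : K) := by
    intro j
    induction j with
    | zero =>
      rw [bconv_zero]
      show (1 : K) = (↑f⁻¹ : K) * ((f : K) * D^[0] (↑f⁻¹ : K) * 1) * (f : K)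
      simp
    | succ m ih =>
      rw [q_rec D hadd hmul (ta 1) m, ih, hRrec m, hta1, hu,
        hmul, hmul, D_inv D hadd hmul f]
      simp only [mul_add, add_mul, mul_sub, sub_mul, neg_mul, mul_neg, mul_assoc,
        Units.mul_inv_cancel_left, Units.inv_mul_cancel_left]
      abel
  -- final assembly
  rw [htI k, hI k, ← bconv_eq_sum, ← bconv_eq_sum]
  have s1 : bconv ta (qBell D (ta 1) (-(ta 1))) k
      = bconv ta (fun j => (↑f⁻¹ : K)
          * (bconv (fun i => (f : K) * D^[i] (↑f⁻¹ : K)) (qBell D (a 1) (-(a 1))) j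
              * (f : K))) k :=
    bconv_congr (fun _ => rfl) (fun j => by rw [htQ j, mul_assoc]) k
  rw [s1, bconv_shift]
  have s2 : bconv (fun i => ta i * (↑f⁻¹ : K))
      (fun j => bconv (fun i => (f : K) * D^[i] (↑f⁻¹ : K)) (qBell D (a 1) (-(a 1))) j
        * (f : K)) k
      = bconv (fun i => (↑f⁻¹ : K) * bconv a (fun i => D^[i] (f : K) * (↑f⁻¹ : K)) i)
        (fun j => bconv (fun i => (f : K) * D^[i] (↑f⁻¹ : K)) (qBell D (a 1) (-(a 1))) j
          * (f : K)) k :=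
    bconv_congr (fun i => hta_w i) (fun _ => rfl) k
  rw [s2, ← bconv_mul_left, ← bconv_mul_right, bconv_assoc]
  have s3 : bconv a (fun i => bconv (fun i => D^[i] (f : K) * (↑f⁻¹ : K))
      (fun j => bconv (fun i => (f : K) * D^[i] (↑f⁻¹ : K))
        (qBell D (a 1) (-(a 1))) j) i) k
      = bconv a (qBell D (a 1) (-(a 1))) k :=
    bconv_congr (fun _ => rfl) (fun i => hphiR i) k
  rw [s3]
  rw [mul_assoc]
end

section
/- Let K be a unital associative ℚ-algebra with a derivation D (an additive map satisfying the Leibniz rule), let φ : K → K be a ring homomorphism, and let σ be a central unit of K such that all iterated derivatives D^j(σ) are central and such that the chain rule D(φ(a)) = σ⁻¹ * φ(D(a)) holds for all a ∈ K. Fix n ≥ 2 and oper-gauge coefficients a_0 = 1, a_1 = 0, and a_2, ..., a_n ∈ K. Let B_{m,j} be defined by B_{0,0} = 1, B_{m,j} = 0 for j < 0 or j > m, and B_{m+1,j} = σ * B_{m,j−1} + σ * D(B_{m,j}), and define the pulled-back coefficients ã_m := C(n,m)⁻¹ • Σ_{i=0}^{m} C(n,i) * φ(a_i) * σ^{−n}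 * B_{n−i, n−m} for m = 1, 2. Then ã_2 − D(ã_1) − ã_1^2 = σ^{−2} * φ(a_2) + ((n+1)/6) • S, where S := −D^2(σ) * σ⁻¹ + (1/2) • (D(σ) * σ⁻¹)^2 is the Schwarzian in σ-notation. -/
/-- the reparametrized `I₂` picks up the Schwarzian anomaly
`((n+1)/6) S(λ)` in the `σ`-formalism. -/
theorem I2_reparametrization_schwarzian {K : Type*} [Ring K] [Algebra ℚ K]
    (D : K → K)
    (hadd : ∀ a b : K, D (a + b) = D a + D b)
    (hmul : ∀ a b : K, D (a * b) = D a * b + a * D b)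
    (φ : K →+* K) (σ : Kˣ)
    (hcentral : ∀ (j : ℕ) (x : K), D^[j] (σ : K) * x = x * D^[j] (σ : K))
    (hchain : ∀ x : K, D (φ x) = (↑σ⁻¹ : K) * φ (D x))
    (n : ℕ) (hn : 2 ≤ n)
    (a : ℕ → K) (ha0 : a 0 = 1) (ha1 : a 1 = 0)
    (B : ℕ → ℤ → K)
    (hB00 : B 0 0 = 1)
    (hBzero : ∀ (m : ℕ) (j : ℤ), j < 0 ∨ (m : ℤ) < j → B m j = 0)
    (hBrec : ∀ (m : ℕ) (j : ℤ),
      B (m + 1) j = (σ : K) * B m (j - 1) + (σ : K) * D (B m j))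
    (ta1 ta2 : K)
    (hta1 : ta1 = ((n.choose 1 : ℚ)⁻¹) •
      ∑ i ∈ Finset.range 2,
        (n.choose i : K) * φ (a i) * (↑σ⁻¹ : K) ^ n * B (n - i) ((n : ℤ) - 1))
    (hta2 : ta2 = ((n.choose 2 : ℚ)⁻¹) •
      ∑ i ∈ Finset.range 3,
        (n.choose i : K) * φ (a i) * (↑σ⁻¹ : K) ^ n * B (n - i) ((n : ℤ) - 2)) :
    ta2 - D ta1 - ta1 ^ 2
      = (↑σ⁻¹ : K) ^ 2 * φ (a 2)
          + (((n : ℚ) + 1) / 6) •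
              (-(D (D (σ : K)) * (↑σ⁻¹ : K))
                + (1 / 2 : ℚ) • (D (σ : K) * (↑σ⁻¹ : K)) ^ 2) := by
  obtain ⟨m, rfl⟩ : ∃ m, n = m + 2 := ⟨n - 2, by omega⟩
  clear hn
  set s : K := (σ : K) with hs
  set si : K := (↑σ⁻¹ : K) with hsidef
  set t : K := D s with ht
  set u : K := D t with hu
  -- basic facts about D
  have hD0 : D 0 = 0 := by
    have h := hadd 0 0
    rw [add_zero] at h
    have h2 : D 0 + D 0 = D 0 + 0 := by rw [add_zero, ← h]
    exact add_left_cancel h2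
  let Dh : K →+ K := AddMonoidHom.mk' D hadd
  have hDh : ∀ x, Dh x = D x := fun _ => rfl
  have hD1 : D 1 = 0 := by
    have h := hmul 1 1
    simp only [one_mul, mul_one] at h
    exact left_eq_add.mp h
  have hDalg : ∀ q : ℚ, D (algebraMap ℚ K q) = 0 := by
    intro q
    have hden : ((q.den : ℚ)) * q = (q.num : ℚ) := by
      rw [mul_comm]
      rw [Rat.mul_den_eq_num]
    have h1 : (q.den : ℕ) • D (algebraMap ℚ K q) = 0 := by
      rw [← hDh, ← map_nsmul]
      have h2 : (q.den : ℕ) • (algebraMap ℚ K q) = (q.num : ℤ) • (1 : K) := by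
        rw [nsmul_eq_mul, zsmul_eq_mul, mul_one]
        calc (q.den : K) * algebraMap ℚ K q
            = algebraMap ℚ K ((q.den : ℚ) * q) := by rw [map_mul, map_natCast]
          _ = (q.num : K) := by rw [hden, map_intCast]
      rw [h2, map_zsmul, hDh, hD1, smul_zero]
    have hd0 : ((q.den : ℚ)) ≠ 0 := by exact_mod_cast q.den_nz
    calc D (algebraMap ℚ K q)
        = ((q.den : ℚ))⁻¹ • ((q.den : ℚ) • D (algebraMap ℚ K q)) := by
          rw [smul_smul, inv_mul_cancel₀ hd0, one_smul]
      _ = 0 := by rw [Nat.cast_smul_eq_nsmul, h1, smul_zero]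
  have hDq : ∀ (q : ℚ) (x : K), D (q • x) = q • D x := by
    intro q x
    rw [Algebra.smul_def, hmul, hDalg, zero_mul, zero_add, ← Algebra.smul_def]
  -- centrality
  have hsc : ∀ x : K, s * x = x * s := by
    intro x; have := hcentral 0 x; simpa using this
  have htc : ∀ x : K, t * x = x * t := by
    intro x; have := hcentral 1 x; simpa using this
  have huc : ∀ x : K, u * x = x * u := by
    intro x; have := hcentral 2 x
    simpa [Function.iterate_succ_apply', ht, hu] using this
  have hssi : s * si = 1 := Units.mul_inv σ
  have hsis : si * s = 1 := Units.inv_mul σ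
  have hsic : ∀ x : K, si * x = x * si := by
    intro x
    calc si * x = si * x * (s * si) := by rw [hssi, mul_one]
      _ = si * (x * s) * si := by noncomm_ring
      _ = si * (s * x) * si := by rw [← hsc]
      _ = (si * s) * (x * si) := by noncomm_ring
      _ = x * si := by rw [hsis, one_mul]
  -- derivative of powers
  have hDpow : ∀ k : ℕ, D (s ^ (k+1)) = (k+1 : ℚ) • (s ^ k * t) := by
    intro k
    induction k with
    | zero => simp [ht]
    | succ k ih =>
      have : s ^ (k+2) = s ^ (k+1) * s := by rw [pow_succ]
      rw [this, hmul, ih, ← ht]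
      have h1 : (s ^ k * t) * s = s ^ (k+1) * t := by
        rw [mul_assoc, htc s, ← mul_assoc, ← pow_succ]
      rw [smul_mul_assoc, h1]
      push_cast
      module
  -- derivative of si
  have hDsi : D si = -(si^2 * t) := by
    have h := hmul s si
    rw [hssi, hD1, ← ht] at h
    have h2 : s * D si = -(t * si) := by
      have := h.symm
      linear_combination (norm := noncomm_ring) this
    calc D si = (si * s) * D si := by rw [hsis, one_mul]
      _ = si * (-(t * si)) := by rw [mul_assoc, h2]
      _ = -(si^2 * t) := by rw [← hsic t]; noncomm_ring
  -- B on the diagonal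
  have hBnn : ∀ k : ℕ, B k (k : ℤ) = s ^ k := by
    intro k
    induction k with
    | zero => simpa using hB00
    | succ k ih =>
      have hcast : ((k+1 : ℕ) : ℤ) = (k : ℤ) + 1 := by push_cast; ring
      rw [hBrec, hcast, show (k : ℤ) + 1 - 1 = (k : ℤ) by ring, ih,
        hBzero k ((k:ℤ)+1) (Or.inr (by omega)), hD0, mul_zero, add_zero, ← pow_succ']
  -- first subdiagonal
  have hB1 : ∀ k : ℕ, B (k+1) (k : ℤ) = ((k:ℚ)*(k+1)/2) • (s ^ k * t) := by
    intro k
    induction k with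
    | zero =>
      have := hBrec 0 0
      rw [hB00, hD1, mul_zero, add_zero, hBzero 0 (0-1) (Or.inl (by omega)), mul_zero] at this
      simpa using this
    | succ k ih =>
      have hcast : ((k+1 : ℕ) : ℤ) = (k : ℤ) + 1 := by push_cast; ring
      rw [hcast, hBrec, show (k : ℤ) + 1 - 1 = (k : ℤ) by ring, ih,
        show ((k:ℤ)+1) = ((k+1:ℕ) : ℤ) by push_cast; ring, hBnn, hDpow,
        mul_smul_comm, mul_smul_comm]
      simp only [← mul_assoc, ← pow_succ']
      push_cast
      module
  -- second subdiagonal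
  have hB2 : ∀ k : ℕ, B (k+2) (k : ℤ) =
      ((k:ℚ)*(k+1)*(3*k+1)*(k+2)/24) • (s ^ k * t^2)
      + ((k:ℚ)*(k+1)*(k+2)/6) • (s ^ (k+1) * u) := by
    intro k
    induction k with
    | zero =>
      have hrec := hBrec 1 0
      have hB10 : B 1 (0:ℤ) = 0 := by
        have := hB1 0
        simpa using this
      rw [hB10, hD0, mul_zero, add_zero, hBzero 1 (0-1) (Or.inl (by omega)), mul_zero] at hrec
      have h20 : B 2 (0:ℤ) = 0 := by simpa using hrec
      simpa using h20
    | succ k ih =>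
      have hcast : ((k+1 : ℕ) : ℤ) = (k : ℤ) + 1 := by push_cast; ring
      rw [hcast, show (k:ℕ)+1+2 = (k+2)+1 by ring, hBrec,
        show (k : ℤ) + 1 - 1 = (k : ℤ) by ring, ih,
        show ((k:ℤ)+1) = ((k+1:ℕ) : ℤ) by push_cast; ring, hB1 (k+1)]
      rw [hDq]
      have hD1' : D (s ^ (k+1) * t) = ((k+1:ℚ)) • (s^k * t^2) + s^(k+1) * u := by
        rw [hmul, hDpow, ← hu, smul_mul_assoc]
        congr 2
        rw [mul_assoc, sq]
      rw [hD1']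
      simp only [mul_add, mul_smul_comm, smul_add, smul_smul, ← mul_assoc, ← pow_succ']
      push_cast
      module
  -- inverse power lemmas
  have hinvpow : ∀ k : ℕ, si ^ k * s ^ k = 1 := by
    intro k
    induction k with
    | zero => simp
    | succ k ih =>
      calc si ^ (k+1) * s ^ (k+1) = si ^ k * (si * s) * s ^ k := by
            rw [pow_succ, pow_succ']; noncomm_ring
        _ = 1 := by rw [hsis, mul_one, ih]
  have hip1 : si ^ (m+2) * s ^ (m+1) = si := by
    calc si ^ (m+2) * s ^ (m+1) = si * (si ^ (m+1) * s ^ (m+1)) := by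
          rw [pow_succ']; noncomm_ring
      _ = si := by rw [hinvpow, mul_one]
  have hip2 : si ^ (m+2) * s ^ m = si ^ 2 := by
    calc si ^ (m+2) * s ^ m = si ^ 2 * (si ^ m * s ^ m) := by
          rw [show m + 2 = 2 + m by ring, pow_add]; noncomm_ring
      _ = si ^ 2 := by rw [hinvpow, mul_one]
  -- closed form for ta1
  have hch1 : ((m+2).choose 1 : ℚ) = (m : ℚ) + 2 := by
    rw [Nat.choose_one_right]; push_cast; ring
  have hch2 : ((m+2).choose 2 : ℚ) = ((m:ℚ)+1) * ((m:ℚ)+2) / 2 := by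
    rw [Nat.cast_choose_two]; push_cast; ring
  have hne2 : ((m:ℚ)+1) * ((m:ℚ)+2) / 2 ≠ 0 := by positivity
  have hta1' : ta1 = (((m:ℚ)+1)/2) • (si * t) := by
    rw [hta1]
    rw [Finset.sum_range_succ, Finset.sum_range_succ, Finset.sum_range_zero]
    rw [ha1, map_zero, mul_zero, zero_mul, zero_mul, add_zero, zero_add]
    rw [ha0, map_one, mul_one, Nat.choose_zero_right, Nat.cast_one, one_mul]
    rw [show ((m+2:ℕ) : ℤ) - 1 = ((m+1 : ℕ) : ℤ) by push_cast; ring]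
    rw [show m + 2 - 0 = (m+1)+1 from rfl, hB1 (m+1), mul_smul_comm, ← mul_assoc, hip1]
    rw [smul_smul]
    congr 1
    rw [hch1]
    push_cast
    field_simp
    ring
  -- closed form for ta2
  have hta2' : ta2 = ((m:ℚ)*(3*(m:ℚ)+1)/12) • (si^2 * t^2) + ((m:ℚ)/3) • (si * u)
      + si^2 * φ (a 2) := by
    rw [hta2]
    rw [Finset.sum_range_succ, Finset.sum_range_succ, Finset.sum_range_succ,
      Finset.sum_range_zero, zero_add]
    rw [ha1, map_zero, mul_zero, zero_mul, zero_mul, add_zero]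
    rw [ha0, map_one, mul_one, Nat.choose_zero_right, Nat.cast_one, one_mul]
    rw [show ((m+2:ℕ) : ℤ) - 2 = (m : ℤ) by push_cast; ring]
    rw [show m + 2 - 0 = m + 2 from rfl, show m + 2 - 2 = m from rfl]
    rw [hB2 m, hBnn m]
    rw [mul_assoc (((m+2).choose 2 : K) * φ (a 2)), hip2]
    rw [show (((m+2).choose 2 : K)) = algebraMap ℚ K (((m+2).choose 2 : ℚ)) by
      simp [map_natCast]]
    rw [← Algebra.smul_def, smul_mul_assoc]
    rw [mul_add, mul_smul_comm, mul_smul_comm, ← mul_assoc, ← mul_assoc, hip2, hip1]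
    rw [smul_add, smul_add, smul_smul, smul_smul, smul_smul, hch2]
    have hfa : φ (a 2) * si ^ 2 = si ^ 2 * φ (a 2) := by
      have h := hsic (φ (a 2))
      calc φ (a 2) * si ^ 2 = φ (a 2) * si * si := by rw [sq, mul_assoc]
        _ = si * φ (a 2) * si := by rw [h]
        _ = si * (si * φ (a 2)) := by rw [mul_assoc, ← h]
        _ = si ^ 2 * φ (a 2) := by rw [sq, mul_assoc]
    rw [hfa]
    rw [inv_mul_cancel₀ hne2, one_smul]
    congr 2
    · congr 1
      field_simp
      ring
    · congr 1
      field_simp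
      ring
  -- derivative of ta1 and its square
  have hDta1 : D ta1 = (((m:ℚ)+1)/2) • (-(si^2 * t^2) + si * u) := by
    rw [hta1', hDq, hmul, hDsi, ← hu]
    congr 2
    rw [neg_mul, mul_assoc, ← sq]
  have hta1sq : ta1 ^ 2 = ((((m:ℚ)+1)/2)^2) • (si^2 * t^2) := by
    rw [hta1', smul_pow]
    congr 1
    have h1 : t * si = si * t := (hsic t).symm
    calc (si*t)^2 = si*(t*si)*t := by rw [sq]; noncomm_ring
      _ = si*(si*t)*t := by rw [h1]
      _ = si^2*t^2 := by rw [sq, sq]; noncomm_ring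
  -- normalize the right-hand side
  have husi : u * si = si * u := (hsic u).symm
  have htsisq : (t * si)^2 = si^2 * t^2 := by
    have h1 : t * si = si * t := (hsic t).symm
    rw [h1]
    calc (si*t)^2 = si*(t*si)*t := by rw [sq]; noncomm_ring
      _ = si*(si*t)*t := by rw [h1]
      _ = si^2*t^2 := by rw [sq, sq]; noncomm_ring
  rw [hta2', hDta1, hta1sq, husi, htsisq]
  push_cast
  match_scalars
  · field_simp
    ring
  · field_simp
    ring
  · ring
end

section
/- Let k ∈ ℤ, and let a, b, c, d be real numbers with a*d − b*c = 1. Let ℍ := { z ∈ ℂ : 0 < Im z }, and let f, G : ℂ → ℂ be complex differentiable at every point of ℍ. Suppose that for all z ∈ ℍ: f((a*z+b)/(c*z+d)) = (c*z+d)^k * f(z) (weight-k modularity of f) and G((a*z+b)/(c*z+d)) = (c*z+d)^2 * G(z) + 2*c*(c*z+d) (modular connection law for G). Define ∇f : ℂ → ℂ by (∇f)(z) := deriv f z − (k/2) * G(z) * f(z). Then for all z ∈ ℍ, (∇f)((a*z+b)/(c*z+d)) = (c*z+d)^{k+2} * (∇f)(z); that is, the covariant derivative ∇f transforms with weight k+2.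 -/
/-- the covariant derivative `∇f = f' - (k/2) G f` attached to a
modular connection `G` transforms with weight `k + 2`. -/
theorem covariant_derivative_weight_raising (k : ℤ) (a b c d : ℝ)
    (hdet : a * d - b * c = 1)
    (f G : ℂ → ℂ)
    (hf : ∀ z : ℂ, 0 < z.im → DifferentiableAt ℂ f z)
    (hG : ∀ z : ℂ, 0 < z.im → DifferentiableAt ℂ G z)
    (hfmod : ∀ z : ℂ, 0 < z.im →
      f (((a : ℂ) * z + (b : ℂ)) / ((c : ℂ) * z + (d : ℂ)))
        = ((c : ℂ) * z + (d : ℂ)) ^ k * f z)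
    (hGmod : ∀ z : ℂ, 0 < z.im →
      G (((a : ℂ) * z + (b : ℂ)) / ((c : ℂ) * z + (d : ℂ)))
        = ((c : ℂ) * z + (d : ℂ)) ^ 2 * G z
            + 2 * (c : ℂ) * ((c : ℂ) * z + (d : ℂ)))
    (nf : ℂ → ℂ)
    (hnf : ∀ z : ℂ, nf z = deriv f z - ((k : ℂ) / 2) * G z * f z) :
    ∀ z : ℂ, 0 < z.im →
      nf (((a : ℂ) * z + (b : ℂ)) / ((c : ℂ) * z + (d : ℂ)))
        = ((c : ℂ) * z + (d : ℂ)) ^ (k + 2) * nf z := by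
  intro z hz
  have hdetC : (a : ℂ) * d - b * c = 1 := by exact_mod_cast hdet
  set J : ℂ := (c : ℂ) * z + d with hJ
  -- J ≠ 0
  have hj : J ≠ 0 := by
    intro h
    have him : J.im = c * z.im := by simp [hJ, Complex.add_im, Complex.mul_im]
    have hre : J.re = c * z.re + d := by simp [hJ, Complex.add_re, Complex.mul_re]
    rcases eq_or_ne c 0 with hc | hc
    · have hd : d = 0 := by
        have := congrArg Complex.re h
        simp [hre, hc] at this
        exact this
      rw [hc, hd] at hdet; simp at hdet
    · have := congrArg Complex.im h
      simp [him] at this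
      rcases this with h1 | h1
      · exact hc h1
      · linarith
  set w : ℂ := ((a : ℂ) * z + b) / J with hw
  -- the image is in the upper half plane
  have him : 0 < w.im := by
    have hns : 0 < Complex.normSq J := Complex.normSq_pos.mpr hj
    have himw : w.im = z.im / Complex.normSq J := by
      rw [hw, Complex.div_im]
      have h1 : ((a : ℂ) * z + b).im = a * z.im := by simp [Complex.add_im, Complex.mul_im]
      have h2 : ((a : ℂ) * z + b).re = a * z.re + b := by simp [Complex.add_re, Complex.mul_re]
      have h3 : J.im = c * z.im := by simp [hJ, Complex.add_im, Complex.mul_im]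
      have h4 : J.re = c * z.re + d := by simp [hJ, Complex.add_re, Complex.mul_re]
      rw [h1, h2, h3, h4]
      field_simp
      ring_nf
      nlinarith [hdet, sq_nonneg z.im]
    rw [himw]
    positivity
  have hopen : IsOpen {u : ℂ | 0 < u.im} :=
    isOpen_lt continuous_const Complex.continuous_im
  -- derivatives
  have h1 : HasDerivAt (fun u : ℂ => (a : ℂ) * u + b) a z := by
    simpa using ((hasDerivAt_id z).const_mul (a : ℂ)).add_const (b : ℂ)
  have h2 : HasDerivAt (fun u : ℂ => (c : ℂ) * u + d) c z := by
    simpa using ((hasDerivAt_id z).const_mul (c : ℂ)).add_const (d : ℂ)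
  have hγ : HasDerivAt (fun u : ℂ => ((a : ℂ) * u + b) / ((c : ℂ) * u + d))
      (((a : ℂ) * J - ((a : ℂ) * z + b) * c) / J ^ 2) z := h1.div h2 hj
  have hγ' : HasDerivAt (fun u : ℂ => ((a : ℂ) * u + b) / ((c : ℂ) * u + d))
      (J ^ 2)⁻¹ z := by
    convert hγ using 1
    have h5 : (a : ℂ) * J - ((a : ℂ) * z + b) * c = 1 := by
      rw [hJ]; linear_combination hdetC
    rw [h5, one_div]
  have hfd : HasDerivAt f (deriv f w) w := (hf w him).hasDerivAt
  have hL : HasDerivAt (fun u : ℂ => f (((a : ℂ) * u + b) / ((c : ℂ) * u + d)))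
      (deriv f w * (J ^ 2)⁻¹) z := by
    simpa [hw, Function.comp_def] using hfd.comp z hγ'
  have h3 : HasDerivAt (fun u : ℂ => ((c : ℂ) * u + d) ^ k)
      ((k : ℂ) * J ^ (k - 1) * c) z := by
    simpa [Function.comp_def] using (hasDerivAt_zpow k J (Or.inl hj)).comp z h2
  have h4 : HasDerivAt (fun u : ℂ => ((c : ℂ) * u + d) ^ k * f u)
      ((k : ℂ) * J ^ (k - 1) * c * f z + J ^ k * deriv f z) z :=
    h3.mul (hf z hz).hasDerivAt
  have heq : (fun u : ℂ => f (((a : ℂ) * u + b) / ((c : ℂ) * u + d)))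
      =ᶠ[nhds z] (fun u : ℂ => ((c : ℂ) * u + d) ^ k * f u) :=
    Filter.eventuallyEq_of_mem (hopen.mem_nhds hz) (fun u hu => hfmod u hu)
  have hL' : HasDerivAt (fun u : ℂ => ((c : ℂ) * u + d) ^ k * f u)
      (deriv f w * (J ^ 2)⁻¹) z := hL.congr_of_eventuallyEq heq.symm
  have hDeq : deriv f w * (J ^ 2)⁻¹
      = (k : ℂ) * J ^ (k - 1) * c * f z + J ^ k * deriv f z := hL'.unique h4
  have hderivw : deriv f w
      = ((k : ℂ) * J ^ (k - 1) * c * f z + J ^ k * deriv f z) * J ^ 2 := by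
    have h2' : (J ^ 2 : ℂ) ≠ 0 := pow_ne_zero 2 hj
    field_simp at hDeq
    linear_combination hDeq
  have hf1 : f w = J ^ k * f z := by rw [hw, hJ]; exact hfmod z hz
  have hG1 : G w = J ^ 2 * G z + 2 * (c : ℂ) * J := by rw [hw, hJ]; exact hGmod z hz
  have e1 : J ^ (k - 1) = J ^ k * J⁻¹ := by
    rw [zpow_sub₀ hj, zpow_one, div_eq_mul_inv]
  have e2 : J ^ (k + 2) = J ^ k * J ^ 2 := by
    rw [zpow_add₀ hj, zpow_two, sq]
  show nf w = J ^ (k + 2) * nf z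
  rw [hnf, hnf, hf1, hG1, hderivw, e1, e2]
  field_simp
  ring
end

section
/- Let A be a complete normed ring that is a normed ℂ-algebra with unit, let N be a nonzero integer, and let a, b, c, d be real numbers with a*d − b*c = 1. Let ℍ := { z ∈ ℂ : 0 < Im z }, and let Φ : ℂ → A be differentiable at every point of ℍ, with Φ(z) invertible in A for every z ∈ ℍ, and satisfying the weight-N modularity Φ((a*z+b)/(c*z+d)) = (c*z+d)^N • Φ(z) for all z ∈ ℍ. Define G(z) := (2/N) • (Φ(z)⁻¹ * deriv Φ z). Then G is a modular connection of eccentricity 1: for all z ∈ ℍ, G((a*z+b)/(c*z+d)) = (c*z+d)^2 • G(z) + (2*c*(c*z+d)) • 1, where 1 is the unit of A. -/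
lemma ring_inverse_smul' {A : Type*} [Ring A] [Algebra ℂ A] (s : ℂ) (hs : s ≠ 0)
    {x : A} (hx : IsUnit x) : Ring.inverse (s • x) = s⁻¹ • Ring.inverse x := by
  have hu : IsUnit (s • x) := by
    rw [Algebra.smul_def]
    exact (hs.isUnit.map (algebraMap ℂ A)).mul hx
  have h2 : (s • x) * (s⁻¹ • Ring.inverse x) = 1 := by
    rw [smul_mul_smul_comm, mul_inv_cancel₀ hs, Ring.mul_inverse_cancel x hx, one_smul]
  calc Ring.inverse (s • x) = Ring.inverse (s • x) * ((s • x) * (s⁻¹ • Ring.inverse x)) := by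
        rw [h2, mul_one]
    _ = (Ring.inverse (s • x) * (s • x)) * (s⁻¹ • Ring.inverse x) := by rw [mul_assoc]
    _ = s⁻¹ • Ring.inverse x := by rw [Ring.inverse_mul_cancel _ hu, one_mul]

/-- the Maurer–Cartan logarithmic derivative
`G = (2/N) • (Φ⁻¹ * Φ')` of an invertible weight-`N` form is a modular
connection of eccentricity 1. -/
theorem maurer_cartan_modular_connection
    {A : Type*} [NormedRing A] [NormedAlgebra ℂ A] [CompleteSpace A]
    (N : ℤ) (hN : N ≠ 0) (a b c d : ℝ) (hdet : a * d - b * c = 1)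
    (Φ : ℂ → A)
    (hΦdiff : ∀ z : ℂ, 0 < z.im → DifferentiableAt ℂ Φ z)
    (hΦunit : ∀ z : ℂ, 0 < z.im → IsUnit (Φ z))
    (hΦmod : ∀ z : ℂ, 0 < z.im →
      Φ (((a : ℂ) * z + (b : ℂ)) / ((c : ℂ) * z + (d : ℂ)))
        = (((c : ℂ) * z + (d : ℂ)) ^ N) • Φ z)
    (G : ℂ → A)
    (hG : ∀ z : ℂ, G z = ((2 : ℂ) / (N : ℂ)) • (Ring.inverse (Φ z) * deriv Φ z)) :
    ∀ z : ℂ, 0 < z.im →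
      G (((a : ℂ) * z + (b : ℂ)) / ((c : ℂ) * z + (d : ℂ)))
        = (((c : ℂ) * z + (d : ℂ)) ^ 2) • G z
            + ((2 : ℂ) * (c : ℂ) * ((c : ℂ) * z + (d : ℂ))) • (1 : A) := by
  intro z hz
  have hdetC : (a : ℂ) * (d : ℂ) - (b : ℂ) * (c : ℂ) = 1 := by
    exact_mod_cast hdet
  set q : ℂ := (c : ℂ) * z + (d : ℂ) with hq_def
  have hq : q ≠ 0 := by
    rcases eq_or_ne c 0 with hc | hc
    · have hd : d ≠ 0 := by
        intro hd; rw [hc, hd] at hdet; simp at hdet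
      simp [hq_def, hc, hd, Complex.ofReal_ne_zero.mpr hd]
    · intro h
      have him : q.im = c * z.im := by
        simp [hq_def, Complex.add_im, Complex.mul_im]
      rw [h] at him
      have : c * z.im ≠ 0 := mul_ne_zero hc (ne_of_gt hz)
      exact this (by simpa using him.symm)
  set w : ℂ := ((a : ℂ) * z + (b : ℂ)) / q with hw_def
  have hnsq : 0 < Complex.normSq q := Complex.normSq_pos.mpr hq
  have hw : 0 < w.im := by
    have : w.im = z.im / Complex.normSq q := by
      rw [hw_def, Complex.div_im]
      simp only [Complex.add_im, Complex.add_re, Complex.mul_im, Complex.mul_re,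
        Complex.ofReal_re, Complex.ofReal_im, hq_def]
      field_simp
      ring_nf
      linear_combination z.im * (Complex.normSq (↑c * z + ↑d))⁻¹ * hdet
    rw [this]; positivity
  -- derivative of the Möbius map
  have hden : HasDerivAt (fun x : ℂ => (c : ℂ) * x + (d : ℂ)) (c : ℂ) z := by
    simpa using ((hasDerivAt_id z).const_mul (c : ℂ)).add_const (d : ℂ)
  have hnum : HasDerivAt (fun x : ℂ => (a : ℂ) * x + (b : ℂ)) (a : ℂ) z := by
    simpa using ((hasDerivAt_id z).const_mul (a : ℂ)).add_const (b : ℂ)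
  have hm : HasDerivAt (fun x : ℂ => ((a : ℂ) * x + (b : ℂ)) / ((c : ℂ) * x + (d : ℂ)))
      (1 / q ^ 2) z := by
    have := hnum.div hden hq
    have hnum1 : (↑a * ((c:ℂ) * z + ↑d) - ((a:ℂ) * z + ↑b) * ↑c) = 1 := by
      linear_combination hdetC
    rw [hnum1] at this
    exact this
  have hΦw : HasDerivAt Φ (deriv Φ w) w := (hΦdiff w hw).hasDerivAt
  have hcomp : HasDerivAt
      (fun x : ℂ => Φ (((a : ℂ) * x + (b : ℂ)) / ((c : ℂ) * x + (d : ℂ))))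
      ((1 / q ^ 2) • deriv Φ w) z := hΦw.scomp z hm
  have hpow : HasDerivAt (fun x : ℂ => ((c : ℂ) * x + (d : ℂ)) ^ N)
      ((N : ℂ) * q ^ (N - 1) * (c : ℂ)) z :=
    by have h := (hasDerivAt_zpow N ((c:ℂ) * z + (d:ℂ)) (Or.inl hq)).comp z hden; exact h
  have hΦz : HasDerivAt Φ (deriv Φ z) z := (hΦdiff z hz).hasDerivAt
  have hrhs : HasDerivAt (fun x : ℂ => ((c : ℂ) * x + (d : ℂ)) ^ N • Φ x)
      (q ^ N • deriv Φ z + ((N : ℂ) * q ^ (N - 1) * (c : ℂ)) • Φ z) z := hpow.smul hΦz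
  have hopen : IsOpen {x : ℂ | 0 < x.im} := isOpen_lt continuous_const Complex.continuous_im
  have heq : (fun x : ℂ => Φ (((a : ℂ) * x + (b : ℂ)) / ((c : ℂ) * x + (d : ℂ))))
      =ᶠ[nhds z] (fun x : ℂ => ((c : ℂ) * x + (d : ℂ)) ^ N • Φ x) := by
    filter_upwards [hopen.mem_nhds hz] with x hx using hΦmod x hx
  have hcomp' : HasDerivAt (fun x : ℂ => ((c : ℂ) * x + (d : ℂ)) ^ N • Φ x)
      ((1 / q ^ 2) • deriv Φ w) z := hcomp.congr_of_eventuallyEq heq.symm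
  have huniq : q ^ N • deriv Φ z + ((N : ℂ) * q ^ (N - 1) * (c : ℂ)) • Φ z
      = (1 / q ^ 2) • deriv Φ w := hrhs.unique hcomp'
  -- solve for deriv Φ w
  have hkey : deriv Φ w = (q ^ 2 * q ^ N) • deriv Φ z
      + (q ^ 2 * ((N : ℂ) * q ^ (N - 1) * (c : ℂ))) • Φ z := by
    have := congrArg (fun x : A => (q ^ 2 : ℂ) • x) huniq.symm
    simpa [smul_smul, smul_add, mul_one_div, div_self (pow_ne_zero 2 hq), mul_inv_cancel₀ (pow_ne_zero 2 hq)] using this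
  have hNC : (N : ℂ) ≠ 0 := Int.cast_ne_zero.mpr hN
  have hqN : (q : ℂ) ^ N ≠ 0 := zpow_ne_zero N hq
  have hmod := hΦmod z hz
  rw [← hq_def, ← hw_def] at hmod
  have hinv : Ring.inverse (Φ w) = (q ^ N)⁻¹ • Ring.inverse (Φ z) := by
    rw [hmod, ring_inverse_smul' _ hqN (hΦunit z hz)]
  have s1 : (q ^ N)⁻¹ * (q ^ 2 * q ^ N) = q ^ 2 := by
    field_simp
  have s2 : (q ^ N)⁻¹ * (q ^ 2 * ((N : ℂ) * q ^ (N - 1) * (c : ℂ))) = (N : ℂ) * (c : ℂ) * q := by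
    rw [zpow_sub₀ hq, zpow_one]
    field_simp
  show G w = q ^ 2 • G z + (2 * (c : ℂ) * q) • (1 : A)
  rw [hG, hG, hinv, hkey, mul_add, smul_mul_smul_comm, smul_mul_smul_comm, s1, s2,
    Ring.inverse_mul_cancel _ (hΦunit z hz), smul_add, smul_smul, smul_smul, smul_smul]
  congr 1
  · congr 1
    ring
  · congr 1
    field_simp
end

section
/- Let A be a unital associative (not necessarily commutative) ℂ-algebra, let g ≥ 1, let M be a g×g matrix with complex entries, and let X_1, ..., X_g be symmetric g×g matrices with entries in A. Define the ordered mixed determinant ODet(X_1, ..., X_g) := (1/g!) • Σ_{σ, τ ∈ S_g} sgn(σ) sgn(τ) (X_1)_{σ(1),τ(1)} * (X_2)_{σ(2),τ(2)} * ... * (X_g)_{σ(g),τ(g)}, where the product is taken in increasing order of the index i and the sum ranges over all pairs of permutations of {1,...,g}. Then ODet(M X_1 Mᵀ, ..., M X_g Mᵀ) = det(M)^2 • ODet(X_1, ..., X_g), where M X Mᵀ is formed using the scalar action of the entries of M on A (so (M X Mᵀ)_{a,b} = Σ_{p,q} M_{a,p} M_{b,q} • X_{p,q}). -/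
open scoped BigOperators

noncomputable def ODet {A : Type*} [Ring A] [Algebra ℂ A] (g : ℕ)
    (X : Fin g → Matrix (Fin g) (Fin g) A) : A :=
  ((g.factorial : ℂ)⁻¹) •
    ∑ σ : Equiv.Perm (Fin g), ∑ τ : Equiv.Perm (Fin g),
      (((Equiv.Perm.sign σ : ℤ) * (Equiv.Perm.sign τ : ℤ)) •
        ((List.finRange g).map (fun i => X i (σ i) (τ i))).prod)

private lemma sum_pairfn_eq_sum_perm {g : ℕ} {β : Type*} [AddCommMonoid β]
    (G : (Fin g → Fin g × Fin g) → β)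
    (hG : ∀ r, (¬ Function.Injective (fun i => (r i).1) ∨
        ¬ Function.Injective (fun i => (r i).2)) → G r = 0) :
    ∑ r : Fin g → Fin g × Fin g, G r
      = ∑ σ : Equiv.Perm (Fin g), ∑ τ : Equiv.Perm (Fin g),
          G (fun i => (σ i, τ i)) := by
  classical
  set e : Equiv.Perm (Fin g) × Equiv.Perm (Fin g) → (Fin g → Fin g × Fin g) :=
    fun p => fun i => (p.1 i, p.2 i) with he
  have hinj : Function.Injective e := by
    intro p q h
    have h1 : ∀ i, (p.1 i, p.2 i) = (q.1 i, q.2 i) := fun i => congrFun h i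
    have hp1 : p.1 = q.1 := Equiv.ext fun i => congrArg Prod.fst (h1 i)
    have hp2 : p.2 = q.2 := Equiv.ext fun i => congrArg Prod.snd (h1 i)
    exact Prod.ext hp1 hp2
  have h1 : ∑ r ∈ Finset.image e Finset.univ, G r
      = ∑ r : Fin g → Fin g × Fin g, G r := by
    apply Finset.sum_subset (Finset.subset_univ _)
    intro r _ hr
    apply hG
    by_contra hcon
    push_neg at hcon
    obtain ⟨h1', h2'⟩ := hcon
    have hb1 : Function.Bijective (fun i => (r i).1) :=
      Finite.injective_iff_bijective.mp h1'
    have hb2 : Function.Bijective (fun i => (r i).2) :=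
      Finite.injective_iff_bijective.mp h2'
    exact hr (Finset.mem_image.mpr ⟨(Equiv.ofBijective _ hb1, Equiv.ofBijective _ hb2),
      Finset.mem_univ _, by funext i; rfl⟩)
  rw [← h1, Finset.sum_image fun p _ q _ h => hinj h, Fintype.sum_prod_type]

/-- covariance of the ordered mixed determinant,
`ODet (M X₁ Mᵀ, …, M X_g Mᵀ) = det(M)² • ODet (X₁, …, X_g)`. -/
theorem ODet_covariance {A : Type*} [Ring A] [Algebra ℂ A]
    (g : ℕ) (hg : 1 ≤ g)
    (M : Matrix (Fin g) (Fin g) ℂ)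
    (X : Fin g → Matrix (Fin g) (Fin g) A)
    (hsymm : ∀ (i : Fin g) (p q : Fin g), X i p q = X i q p) :
    ODet g (fun i => Matrix.of fun p q => ∑ p', ∑ q', (M p p' * M q q') • X i p' q')
      = (M.det ^ 2) • ODet g X := by
  classical
  set f := MultilinearMap.mkPiAlgebraFin ℂ g A with hfdef
  have hf : ∀ v : Fin g → A, ((List.finRange g).map v).prod = f v := by
    intro v
    rw [hfdef, MultilinearMap.mkPiAlgebraFin_apply, List.ofFn_eq_map]
  have hdet : ∀ v : Fin g → Fin g,
      (∑ σ : Equiv.Perm (Fin g),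
        ((Equiv.Perm.sign σ : ℤ) : ℂ) * ∏ i, M (σ i) (v i))
        = (M.submatrix id v).det := by
    intro v
    rw [Matrix.det_apply']
    rfl
  have hdet0 : ∀ v : Fin g → Fin g, ¬ Function.Injective v →
      (M.submatrix id v).det = 0 := by
    intro v hv
    obtain ⟨a, b, hab, hne⟩ := Function.not_injective_iff.mp hv
    exact Matrix.det_zero_of_column_eq hne (fun k => by
      simp [Matrix.submatrix_apply, hab])
  have hdetp : ∀ σ : Equiv.Perm (Fin g),
      (M.submatrix id ⇑σ).det = ((Equiv.Perm.sign σ : ℤ) : ℂ) * M.det := by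
    intro σ
    rw [Matrix.det_permute']
  set P : (Fin g → Fin g × Fin g) → A := fun r => f (fun i => X i (r i).1 (r i).2)
    with hP
  have hentry : ∀ (σ τ : Equiv.Perm (Fin g)) (i : Fin g),
      (Matrix.of fun p q => ∑ p', ∑ q', (M p p' * M q q') • X i p' q') (σ i) (τ i)
        = ∑ pq : Fin g × Fin g, (M (σ i) pq.1 * M (τ i) pq.2) • X i pq.1 pq.2 := by
    intro σ τ i
    rw [← Finset.univ_product_univ, Finset.sum_product]
    rfl
  have hkey : ∀ σ τ : Equiv.Perm (Fin g),
      (((Equiv.Perm.sign σ : ℤ) * (Equiv.Perm.sign τ : ℤ)) •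
        ((List.finRange g).map (fun i =>
          (Matrix.of fun p q => ∑ p', ∑ q', (M p p' * M q q') • X i p' q')
            (σ i) (τ i))).prod)
      = ∑ r : Fin g → Fin g × Fin g,
          (((((Equiv.Perm.sign σ : ℤ) : ℂ)) * ∏ i, M (σ i) (r i).1) *
           ((((Equiv.Perm.sign τ : ℤ) : ℂ)) * ∏ i, M (τ i) (r i).2)) • P r := by
    intro σ τ
    rw [hf]
    simp only [hentry]
    rw [f.map_sum, ← Int.cast_smul_eq_zsmul ℂ, Finset.smul_sum]
    refine Finset.sum_congr rfl fun r _ => ?_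
    rw [f.map_smul_univ, smul_smul, hP]
    congr 1
    rw [Finset.prod_mul_distrib]
    push_cast
    ring
  unfold ODet
  rw [smul_comm (M.det ^ 2)]
  congr 1
  calc
    ∑ σ : Equiv.Perm (Fin g), ∑ τ : Equiv.Perm (Fin g),
        (((Equiv.Perm.sign σ : ℤ) * (Equiv.Perm.sign τ : ℤ)) •
          ((List.finRange g).map (fun i =>
            (Matrix.of fun p q => ∑ p', ∑ q', (M p p' * M q q') • X i p' q')
              (σ i) (τ i))).prod)
      = ∑ σ : Equiv.Perm (Fin g), ∑ τ : Equiv.Perm (Fin g),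
          ∑ r : Fin g → Fin g × Fin g,
            (((((Equiv.Perm.sign σ : ℤ) : ℂ)) * ∏ i, M (σ i) (r i).1) *
             ((((Equiv.Perm.sign τ : ℤ) : ℂ)) * ∏ i, M (τ i) (r i).2)) • P r := by
        exact Finset.sum_congr rfl fun σ _ => Finset.sum_congr rfl fun τ _ => hkey σ τ
    _ = ∑ σ : Equiv.Perm (Fin g), ∑ r : Fin g → Fin g × Fin g,
          ∑ τ : Equiv.Perm (Fin g),
            (((((Equiv.Perm.sign σ : ℤ) : ℂ)) * ∏ i, M (σ i) (r i).1) *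
             ((((Equiv.Perm.sign τ : ℤ) : ℂ)) * ∏ i, M (τ i) (r i).2)) • P r :=
        Finset.sum_congr rfl fun σ _ => Finset.sum_comm
    _ = ∑ r : Fin g → Fin g × Fin g, ∑ σ : Equiv.Perm (Fin g),
          ∑ τ : Equiv.Perm (Fin g),
            (((((Equiv.Perm.sign σ : ℤ) : ℂ)) * ∏ i, M (σ i) (r i).1) *
             ((((Equiv.Perm.sign τ : ℤ) : ℂ)) * ∏ i, M (τ i) (r i).2)) • P r :=
        Finset.sum_comm
    _ = ∑ r : Fin g → Fin g × Fin g,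
          ((M.submatrix id fun i => (r i).1).det *
            (M.submatrix id fun i => (r i).2).det) • P r := by
        refine Finset.sum_congr rfl fun r _ => ?_
        rw [← hdet, ← hdet, Finset.sum_mul_sum, Finset.sum_smul]
        exact Finset.sum_congr rfl fun σ _ => Finset.sum_smul.symm
    _ = ∑ σ : Equiv.Perm (Fin g), ∑ τ : Equiv.Perm (Fin g),
          ((M.submatrix id ⇑σ).det * (M.submatrix id ⇑τ).det) •
            P (fun i => (σ i, τ i)) := by
        apply sum_pairfn_eq_sum_perm
        intro r hr
        rcases hr with h | h
        · rw [hdet0 _ h, zero_mul, zero_smul]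
        · rw [hdet0 _ h, mul_zero, zero_smul]
    _ = M.det ^ 2 • ∑ σ : Equiv.Perm (Fin g), ∑ τ : Equiv.Perm (Fin g),
        (((Equiv.Perm.sign σ : ℤ) * (Equiv.Perm.sign τ : ℤ)) •
          ((List.finRange g).map (fun i => X i (σ i) (τ i))).prod) := by
      rw [Finset.smul_sum]
      refine Finset.sum_congr rfl fun σ _ => ?_
      rw [Finset.smul_sum]
      refine Finset.sum_congr rfl fun τ _ => ?_
      rw [hdetp, hdetp, hf, ← Int.cast_smul_eq_zsmul ℂ, smul_smul, hP]
      congr 1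
      push_cast
      ring
end

section
/- Let g ≥ 1 and let A, B, C, D be g×g real matrices satisfying the symplectic relations Aᵀ*C = Cᵀ*A, Bᵀ*D = Dᵀ*B, and Aᵀ*D − Cᵀ*B = I. Regard A, B, C, D as complex matrices, and let Z be a symmetric g×g complex matrix such that J := C*Z + D is invertible. Then the map φ(W) := (A*W + B)*(C*W + D)⁻¹ on g×g complex matrices is differentiable at Z, and its Fréchet derivative at Z is the linear map H ↦ (Jᵀ)⁻¹ * H * J⁻¹. -/
open Matrix

attribute [local instance]
  Matrix.linftyOpNormedAddCommGroup Matrix.linftyOpNormedRing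
  Matrix.linftyOpNormedAlgebra

/-- the Fréchet derivative of the Siegel action
`W ↦ (AW + B)(CW + D)⁻¹` at a symmetric `Z` with `J = CZ + D` invertible is
`H ↦ (Jᵀ)⁻¹ H J⁻¹`. -/
theorem siegel_action_hasFDerivAt (g : ℕ) (hg : 1 ≤ g)
    (A B C D : Matrix (Fin g) (Fin g) ℝ)
    (h1 : Aᵀ * C = Cᵀ * A) (h2 : Bᵀ * D = Dᵀ * B)
    (h3 : Aᵀ * D - Cᵀ * B = 1)
    (Z : Matrix (Fin g) (Fin g) ℂ) (hZ : Zᵀ = Z)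
    (hJ : IsUnit (C.map Complex.ofReal * Z + D.map Complex.ofReal)) :
    HasFDerivAt
      (fun W : Matrix (Fin g) (Fin g) ℂ =>
        (A.map Complex.ofReal * W + B.map Complex.ofReal) *
          (C.map Complex.ofReal * W + D.map Complex.ofReal)⁻¹)
      (LinearMap.toContinuousLinearMap
        ((LinearMap.mulLeft ℂ
            (((C.map Complex.ofReal * Z + D.map Complex.ofReal)ᵀ)⁻¹)).comp
          (LinearMap.mulRight ℂ
            ((C.map Complex.ofReal * Z + D.map Complex.ofReal)⁻¹))))
      Z := by
  set A' := A.map Complex.ofReal with hA'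
  set B' := B.map Complex.ofReal with hB'
  set C' := C.map Complex.ofReal with hC'
  set D' := D.map Complex.ofReal with hD'
  set J := C' * Z + D' with hJdef
  -- complexified symplectic relations
  have hmul : ∀ X Y : Matrix (Fin g) (Fin g) ℝ,
      (X * Y).map Complex.ofReal = X.map Complex.ofReal * Y.map Complex.ofReal :=
    fun X Y => Matrix.map_mul (f := Complex.ofRealHom)
  have h1' : A'ᵀ * C' = C'ᵀ * A' := by
    have := congrArg (fun M => M.map Complex.ofReal) h1
    simpa [hmul, Matrix.transpose_map, hA', hC'] using this
  have h2' : B'ᵀ * D' = D'ᵀ * B' := by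
    have := congrArg (fun M => M.map Complex.ofReal) h2
    simpa [hmul, Matrix.transpose_map, hB', hD'] using this
  have h3' : A'ᵀ * D' - C'ᵀ * B' = 1 := by
    have := congrArg (fun M => M.map Complex.ofReal) h3
    simpa [hmul, Matrix.transpose_map, Matrix.map_sub,
      Matrix.map_one _ Complex.ofReal_zero Complex.ofReal_one, hA', hB', hC', hD'] using this
  have h3t : D'ᵀ * A' - B'ᵀ * C' = 1 := by
    have := congrArg Matrix.transpose h3'
    simpa [Matrix.transpose_sub, Matrix.transpose_mul] using this
  have hJdet : IsUnit J.det := (Matrix.isUnit_iff_isUnit_det J).1 hJ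
  have hJJ : J * J⁻¹ = 1 := Matrix.mul_nonsing_inv J hJdet
  -- symmetry identity: Jᵀ (A'Z + B') = (A'Z + B')ᵀ J
  have hsymm : Jᵀ * (A' * Z + B') = (A' * Z + B')ᵀ * J := by
    have expand : Jᵀ * (A' * Z + B') - (A' * Z + B')ᵀ * J =
        Z * (C'ᵀ * A' - A'ᵀ * C') * Z + Z * (C'ᵀ * B' - A'ᵀ * D')
          + (D'ᵀ * A' - B'ᵀ * C') * Z + (D'ᵀ * B' - B'ᵀ * D') := by
      simp only [hJdef, Matrix.transpose_add, Matrix.transpose_mul, hZ]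
      noncomm_ring
    have h0 : Jᵀ * (A' * Z + B') - (A' * Z + B')ᵀ * J = 0 := by
      have hneg : C'ᵀ * B' - A'ᵀ * D' = -1 := by rw [← neg_sub, h3']
      rw [expand, h1', h2', hneg, h3t]
      noncomm_ring
    exact sub_eq_zero.mp h0
  -- the key identity: (Jᵀ)⁻¹ = A' - (A'Z + B') (J⁻¹ C')
  have hE : Jᵀ * (A' - (A' * Z + B') * (J⁻¹ * C')) = 1 := by
    have step : Jᵀ * (A' - (A' * Z + B') * (J⁻¹ * C'))
        = Jᵀ * A' - (A' * Z + B')ᵀ * C' := by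
      calc Jᵀ * (A' - (A' * Z + B') * (J⁻¹ * C'))
          = Jᵀ * A' - (Jᵀ * (A' * Z + B')) * (J⁻¹ * C') := by noncomm_ring
        _ = Jᵀ * A' - ((A' * Z + B')ᵀ * J) * (J⁻¹ * C') := by rw [hsymm]
        _ = Jᵀ * A' - (A' * Z + B')ᵀ * ((J * J⁻¹) * C') := by noncomm_ring
        _ = Jᵀ * A' - (A' * Z + B')ᵀ * C' := by rw [hJJ, one_mul]
    have step2 : Jᵀ * A' - (A' * Z + B')ᵀ * C'
        = Z * (C'ᵀ * A' - A'ᵀ * C') + (D'ᵀ * A' - B'ᵀ * C') := by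
      simp only [hJdef, Matrix.transpose_add, Matrix.transpose_mul, hZ]
      noncomm_ring
    rw [step, step2, h1', h3t]
    noncomm_ring
  have hEinv : (Jᵀ)⁻¹ = A' - (A' * Z + B') * (J⁻¹ * C') :=
    Matrix.inv_eq_right_inv hE
  -- analysis part
  have hd1 : HasFDerivAt (fun W : Matrix (Fin g) (Fin g) ℂ => C' * W + D')
      (ContinuousLinearMap.mul ℂ (Matrix (Fin g) (Fin g) ℂ) C') Z :=
    ((ContinuousLinearMap.mul ℂ (Matrix (Fin g) (Fin g) ℂ) C').hasFDerivAt).add_const D'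
  have hinv : HasFDerivAt Ring.inverse
      (-(ContinuousLinearMap.mulLeftRight ℂ _ J⁻¹ J⁻¹)) J := by
    have := hasFDerivAt_ringInverse (𝕜 := ℂ) hJ.unit
    rw [hJ.unit_spec] at this
    have hcu : ((hJ.unit⁻¹ : _ˣ) : Matrix (Fin g) (Fin g) ℂ) = J⁻¹ := by
      rw [Matrix.coe_units_inv, hJ.unit_spec]
    rwa [hcu] at this
  have hd2 : HasFDerivAt (fun W : Matrix (Fin g) (Fin g) ℂ => Ring.inverse (C' * W + D'))
      ((-(ContinuousLinearMap.mulLeftRight ℂ _ J⁻¹ J⁻¹)).comp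
        (ContinuousLinearMap.mul ℂ (Matrix (Fin g) (Fin g) ℂ) C')) Z :=
    HasFDerivAt.comp (g := Ring.inverse) Z hinv hd1
  have hdA : HasFDerivAt (fun W : Matrix (Fin g) (Fin g) ℂ => A' * W + B')
      (ContinuousLinearMap.mul ℂ (Matrix (Fin g) (Fin g) ℂ) A') Z :=
    ((ContinuousLinearMap.mul ℂ (Matrix (Fin g) (Fin g) ℂ) A').hasFDerivAt).add_const B'
  have hprod := hdA.mul' hd2
  have hfun : (fun W : Matrix (Fin g) (Fin g) ℂ =>
      (A' * W + B') * (C' * W + D')⁻¹)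
      = fun W => (A' * W + B') * Ring.inverse (C' * W + D') := by
    funext W
    rw [Matrix.nonsing_inv_eq_ringInverse]
  rw [hfun]
  have heq : (LinearMap.toContinuousLinearMap
        ((LinearMap.mulLeft ℂ ((Jᵀ)⁻¹)).comp (LinearMap.mulRight ℂ (J⁻¹))))
      = ((A' * Z + B') •
          (-((ContinuousLinearMap.mulLeftRight ℂ (Matrix (Fin g) (Fin g) ℂ)) J⁻¹ J⁻¹)).comp
            ((ContinuousLinearMap.mul ℂ (Matrix (Fin g) (Fin g) ℂ)) C') +
        MulOpposite.op (Ring.inverse (C' * Z + D')) •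
          ((ContinuousLinearMap.mul ℂ (Matrix (Fin g) (Fin g) ℂ)) A')) := by
    refine ContinuousLinearMap.ext fun H => ?_
    simp only [LinearMap.coe_toContinuousLinearMap', LinearMap.coe_comp, Function.comp_apply,
      LinearMap.mulRight_apply, LinearMap.mulLeft_apply, ContinuousLinearMap.add_apply,
      ContinuousLinearMap.coe_smul', Pi.smul_apply, ContinuousLinearMap.coe_comp',
      ContinuousLinearMap.neg_apply, ContinuousLinearMap.mulLeftRight_apply,
      ContinuousLinearMap.mul_apply', ContinuousLinearMap.smulRight_apply, smul_eq_mul, op_smul_eq_mul]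
    change Jᵀ⁻¹ * (H * J⁻¹) = (A' * Z + B') * (-(J⁻¹ * (C' * H) * J⁻¹)) +
      A' * H * Ring.inverse (C' * Z + D')
    rw [← Matrix.nonsing_inv_eq_ringInverse, ← hJdef, hEinv]
    noncomm_ring
  rw [heq]
  exact hprod
end
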